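/- Let {b'_n} be an increasing sequence converging to 1/2, and define f_{b'_n}(r) = 0 for r < b'_n, 1 for b'_n ≤ r < 1/2, and 0 for r ≥ 1/2. Then J(m)(f_{b'_n}, 0) = 1 for every n, where 0 denotes the constant zero function; in particular the sequence does not converge to the constant zero function in the Skorohod J2 metric. -/

import Mathlib

def IsPseudometric {M : Type*} (m : M → M → ℝ) : Prop :=
  (∀ x, m x x = 0) ∧ (∀ x y, m x y = m y x) ∧ (∀ x y z, m x z ≤ m x y + m y z)

def Bounded1 {M : Type*} (m : M → M → ℝ) : Prop := ∀ x y, 0 ≤ m x y ∧ m x y ≤ 1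

/-- A function `f : [0,∞) → M` (modelled on all of `ℝ`, with only `[0,∞)` relevant)
is cadlag with respect to the pseudometric `m`: right-continuous with left limits. -/
def Cadlag {M : Type*} (m : M → M → ℝ) (f : ℝ → M) : Prop :=
  (∀ t : ℝ, 0 ≤ t → ∀ ε > (0:ℝ), ∃ δ > (0:ℝ), ∀ t', t ≤ t' → t' < t + δ →
      m (f t) (f t') < ε) ∧
  (∀ t : ℝ, 0 < t → ∃ L : M, ∀ ε > (0:ℝ), ∃ δ > (0:ℝ), ∀ t', t - δ < t' → 0 ≤ t' →
      t' < t → m (f t') L < ε)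

/-- The Skorohod J2 distance: the Hausdorff distance between the graphs of `f` and `g`
in `[0,∞) × M` with the metric `d((x,s),(y,t)) = max (|x-y|) (m s t)`. -/
noncomputable def J {M : Type*} (m : M → M → ℝ) (f g : ℝ → M) : ℝ :=
  max
    (⨆ t : Set.Ici (0:ℝ), ⨅ t' : Set.Ici (0:ℝ), max (m (f t) (g t')) |(t:ℝ) - (t':ℝ)|)
    (⨆ t' : Set.Ici (0:ℝ), ⨅ t : Set.Ici (0:ℝ), max (m (f t) (g t')) |(t:ℝ) - (t':ℝ)|)

theorem skorohod_jump_detected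
    (b : ℕ → ℝ) (hmono : StrictMono b)
    (hlim : Filter.Tendsto b Filter.atTop (nhds (1/2 : ℝ))) :
    (∀ n, J (fun x y : ℝ => |x - y|)
        (fun r => if r < b n then (0:ℝ) else if r < (1/2 : ℝ) then 1 else 0)
        (fun _ => (0:ℝ)) = 1) ∧
    ¬ Filter.Tendsto
        (fun n => J (fun x y : ℝ => |x - y|)
          (fun r => if r < b n then (0:ℝ) else if r < (1/2 : ℝ) then 1 else 0)
          (fun _ => (0:ℝ)))
        Filter.atTop (nhds 0) := by

  have hb : ∀ n, b n < 1/2 := by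
    intro n
    have h1 : b n < b (n+1) := hmono (Nat.lt_succ_self n)
    have h2 : b (n+1) ≤ 1/2 := hmono.monotone.ge_of_tendsto hlim (n+1)
    linarith
  have key : ∀ n, J (fun x y : ℝ => |x - y|)
        (fun r => if r < b n then (0:ℝ) else if r < (1/2 : ℝ) then 1 else 0)
        (fun _ => (0:ℝ)) = 1 := by
    intro n
    set f : ℝ → ℝ := fun r => if r < b n then (0:ℝ) else if r < (1/2:ℝ) then 1 else 0 with hf
    have hfval : ∀ r, f r = 0 ∨ f r = 1 := by
      intro r; simp only [hf]; split_ifs <;> simp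
    have hfbd : ∀ r, |f r| ≤ 1 := by
      intro r; rcases hfval r with h | h <;> simp [h]
    have hJ : J (fun x y : ℝ => |x - y|) f (fun _ => (0:ℝ)) =
        max
          (⨆ t : Set.Ici (0:ℝ), ⨅ t' : Set.Ici (0:ℝ), max |f t - 0| |(t:ℝ) - (t':ℝ)|)
          (⨆ t' : Set.Ici (0:ℝ), ⨅ t : Set.Ici (0:ℝ), max |f t - 0| |(t:ℝ) - (t':ℝ)|) := rfl
    rw [hJ]
    have hinf : ∀ t : Set.Ici (0:ℝ),
        (⨅ t' : Set.Ici (0:ℝ), max |f t - 0| |(t:ℝ) - (t':ℝ)|) = |f t| := by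
      intro t
      apply le_antisymm
      · have h := ciInf_le (f := fun t' : Set.Ici (0:ℝ) => max |f (t:ℝ) - 0| |(t:ℝ) - (t':ℝ)|)
          ⟨0, by rintro x ⟨t', rfl⟩; positivity⟩ t
        simpa using h
      · apply le_ciInf
        intro t'
        simp only [sub_zero]
        exact le_max_left _ _
    have hsup1 : (⨆ t : Set.Ici (0:ℝ), ⨅ t' : Set.Ici (0:ℝ), max |f t - 0| |(t:ℝ) - (t':ℝ)|) = 1 := by
      simp only [hinf]
      apply le_antisymm
      · exact ciSup_le fun t => hfbd t
      · have ht0 : max (b n) 0 ∈ Set.Ici (0:ℝ) := Set.mem_Ici.mpr (le_max_right _ _)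
        have hft0 : f (max (b n) 0) = 1 := by
          simp only [hf]
          rw [if_neg (not_lt.mpr (le_max_left _ _)), if_pos]
          exact max_lt (hb n) (by norm_num)
        have h := le_ciSup (f := fun t : Set.Ici (0:ℝ) => |f (t:ℝ)|)
          ⟨1, by rintro x ⟨t, rfl⟩; exact hfbd t⟩ ⟨max (b n) 0, ht0⟩
        simp only [hft0] at h
        simpa using h
    have hsup2 : (⨆ t' : Set.Ici (0:ℝ), ⨅ t : Set.Ici (0:ℝ), max |f t - 0| |(t:ℝ) - (t':ℝ)|) ≤ 1 := by
      apply ciSup_le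
      intro t'
      have h := ciInf_le (f := fun t : Set.Ici (0:ℝ) => max |f (t:ℝ) - 0| |(t:ℝ) - (t':ℝ)|)
        ⟨0, by rintro x ⟨t, rfl⟩; positivity⟩ t'
      simp only [sub_self, abs_zero, sub_zero] at h ⊢
      exact le_trans h (max_le (hfbd t') zero_le_one)
    rw [hsup1, max_eq_left hsup2]
  refine ⟨key, ?_⟩
  intro h
  simp only [key] at h
  have := tendsto_nhds_unique h tendsto_const_nhds
  norm_num at this
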